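/- Let n ≥ 2, i ∈ [n-1] and J ⊆ [n-1]. Then: (1) the standard inner product ⟨−α∨_i, v_J⟩ ≥ −2, with equality if and only if i ∈ J; and (2) ⟨e_i, v_J⟩ ≥ 0, with equality if and only if i ∉ J. -/
import Mathlib


open Matrix

attribute [local instance] Classical.propDecidable

noncomputable section

namespace PetersonPaper

/-- The natural number `c` (0-based; encoding the 1-based element `c+1`) belongs to
`J ⊆ [n-1]`. -/
def memJ (n : ℕ) (J : Set (Fin (n-1))) (c : ℕ) : Prop :=
  ∃ h : c < n - 1, (⟨c, h⟩ : Fin (n-1)) ∈ J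

/-- The (0-based) first element of the maximal interval of consecutive integers of
`J` containing `i ∈ J`. -/
def compStart (n : ℕ) (J : Set (Fin (n-1))) (i : Fin (n-1)) : ℕ :=
  sInf {a : ℕ | a ≤ i.1 ∧ ∀ c : ℕ, a ≤ c → c ≤ i.1 → memJ n J c}

/-- The (0-based) last element of the maximal interval of consecutive integers of
`J` containing `i ∈ J`. -/
def compEnd (n : ℕ) (J : Set (Fin (n-1))) (i : Fin (n-1)) : ℕ :=
  sSup {b : ℕ | b < n - 1 ∧ i.1 ≤ b ∧ ∀ c : ℕ, i.1 ≤ c → c ≤ b → memJ n J c}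

/-- The vertex `v_J ∈ ℝ^{n-1}`: its `i`-th coordinate is `(i+1-a)(b+1-i)` (1-based)
if `i ∈ J` with `[a,b]` the maximal interval of `J` containing `i`, and `0`
otherwise. -/
def vJ (n : ℕ) (J : Set (Fin (n-1))) : Fin (n-1) → ℝ :=
  fun i => if i ∈ J then
    (((i.1 + 1 - compStart n J i) * (compEnd n J i + 1 - i.1) : ℕ) : ℝ) else 0

/-- The standard inner product on `ℝ^{n-1}`. -/
def dotR (n : ℕ) (a b : Fin (n-1) → ℝ) : ℝ := ∑ i, a i * b i

/-- The standard basis vector `e_i` of `ℝ^{n-1}`. -/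
def stdE (n : ℕ) (i : Fin (n-1)) : Fin (n-1) → ℝ := fun j => if j = i then 1 else 0

/-- `-α^∨_i = e_{i-1} - 2 e_i + e_{i+1}` with the convention `e_0 = e_n = 0`
(1-based; `i : Fin (n-1)` encodes `i.1+1`). -/
def negAlphaV (n : ℕ) (i : Fin (n-1)) : Fin (n-1) → ℝ :=
  fun j => (if j.1 + 1 = i.1 then 1 else 0) - 2 * (if j = i then 1 else 0)
    + (if j.1 = i.1 + 1 then 1 else 0)

/-- The face `F_i^+ = conv{v_J : i ∈ J}`. -/
def Fplus (n : ℕ) (i : Fin (n-1)) : Set (Fin (n-1) → ℝ) :=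
  convexHull ℝ { v | ∃ J : Set (Fin (n-1)), i ∈ J ∧ v = vJ n J }

/-- The face `F_i^- = conv{v_J : i ∉ J}`. -/
def Fminus (n : ℕ) (i : Fin (n-1)) : Set (Fin (n-1) → ℝ) :=
  convexHull ℝ { v | ∃ J : Set (Fin (n-1)), i ∉ J ∧ v = vJ n J }

/-- The polytope `P_{n-1} = conv{v_J : J ⊆ [n-1]}`. -/
def Ppoly (n : ℕ) : Set (Fin (n-1) → ℝ) :=
  convexHull ℝ { v | ∃ J : Set (Fin (n-1)), v = vJ n J }

/-- The face `F_{K,J} = (⋂_{i ∈ K} F_i^+) ∩ (⋂_{i ∉ J} F_i^-)` of `P_{n-1}`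
(intersecting with `P_{n-1}` itself, which encodes the convention
`F_{∅,[n-1]} = P_{n-1}` and is harmless otherwise, all faces being subsets of
`P_{n-1}`). -/
def FKJ (n : ℕ) (K J : Set (Fin (n-1))) : Set (Fin (n-1) → ℝ) :=
  Ppoly n ∩ (⋂ i ∈ K, Fplus n i) ∩ (⋂ i ∈ (Jᶜ : Set (Fin (n-1))), Fminus n i)

section Helpers
variable {n : ℕ} {J : Set (Fin (n-1))}

-- === helpers ===

def SaSet (n : ℕ) (J : Set (Fin (n-1))) (i : Fin (n-1)) : Set ℕ :=
  {a : ℕ | a ≤ i.1 ∧ ∀ c : ℕ, a ≤ c → c ≤ i.1 → memJ n J c}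

def SbSet (n : ℕ) (J : Set (Fin (n-1))) (i : Fin (n-1)) : Set ℕ :=
  {b : ℕ | b < n - 1 ∧ i.1 ≤ b ∧ ∀ c : ℕ, i.1 ≤ c → c ≤ b → memJ n J c}

variable {n : ℕ} {J : Set (Fin (n-1))}

lemma compStart_eq (i : Fin (n-1)) : compStart n J i = sInf (SaSet n J i) := rfl
lemma compEnd_eq (i : Fin (n-1)) : compEnd n J i = sSup (SbSet n J i) := rfl

lemma memJ_self {i : Fin (n-1)} (hi : i ∈ J) : memJ n J i.1 := ⟨i.isLt, hi⟩

lemma mem_of_memJ {i : Fin (n-1)} (h : memJ n J i.1) : i ∈ J := by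
  obtain ⟨h', hm⟩ := h; exact hm

lemma SbSet_bdd (i : Fin (n-1)) : BddAbove (SbSet n J i) :=
  ⟨n - 1, fun b hb => le_of_lt hb.1⟩

lemma self_mem_SaSet {i : Fin (n-1)} (hi : i ∈ J) : i.1 ∈ SaSet n J i := by
  refine ⟨le_refl _, fun c h1 h2 => ?_⟩
  have : c = i.1 := le_antisymm h2 h1
  subst this; exact memJ_self hi

lemma self_mem_SbSet {i : Fin (n-1)} (hi : i ∈ J) : i.1 ∈ SbSet n J i := by
  refine ⟨i.isLt, le_refl _, fun c h1 h2 => ?_⟩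
  have : c = i.1 := le_antisymm h2 h1
  subst this; exact memJ_self hi

lemma compStart_mem {i : Fin (n-1)} (hi : i ∈ J) : compStart n J i ∈ SaSet n J i := by
  rw [compStart_eq]; exact Nat.sInf_mem ⟨i.1, self_mem_SaSet hi⟩

lemma compEnd_mem {i : Fin (n-1)} (hi : i ∈ J) : compEnd n J i ∈ SbSet n J i := by
  rw [compEnd_eq]; exact Nat.sSup_mem ⟨i.1, self_mem_SbSet hi⟩ (SbSet_bdd i)

lemma compStart_le {i : Fin (n-1)} (hi : i ∈ J) : compStart n J i ≤ i.1 :=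
  (compStart_mem hi).1

lemma le_compEnd {i : Fin (n-1)} (hi : i ∈ J) : i.1 ≤ compEnd n J i :=
  (compEnd_mem hi).2.1

lemma compEnd_lt {i : Fin (n-1)} (hi : i ∈ J) : compEnd n J i < n - 1 :=
  (compEnd_mem hi).1

lemma vJ_self_eq {i : Fin (n-1)} (hi : i ∈ J) :
    vJ n J i = ((i.1 : ℝ) - compStart n J i + 1) * ((compEnd n J i : ℝ) - i.1 + 1) := by
  have h1 := compStart_le hi
  have h2 := le_compEnd hi
  rw [vJ, if_pos hi]
  push_cast [Nat.cast_sub (by omega : compStart n J i ≤ i.1 + 1),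
    Nat.cast_sub (by omega : i.1 ≤ compEnd n J i + 1)]
  ring

lemma vJ_nonneg (K : Set (Fin (n-1))) (i : Fin (n-1)) : 0 ≤ vJ n K i := by
  rw [vJ]; split
  · exact Nat.cast_nonneg _
  · exact le_refl _

lemma vJ_pos {i : Fin (n-1)} (hi : i ∈ J) : 0 < vJ n J i := by
  have h1 := compStart_le hi
  have h2 := le_compEnd hi
  rw [vJ_self_eq hi]
  have : (compStart n J i : ℝ) ≤ i.1 := by exact_mod_cast h1
  have : (i.1 : ℝ) ≤ compEnd n J i := by exact_mod_cast h2
  nlinarith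

/-- value of the left neighbor coordinate -/
lemma vJ_left {i : Fin (n-1)} (hi : i ∈ J) (j : Fin (n-1)) (hj : j.1 + 1 = i.1) :
    vJ n J j = ((i.1 : ℝ) - compStart n J i) * ((compEnd n J i : ℝ) - i.1 + 2) := by
  obtain ⟨hA1, hA2⟩ := compStart_mem hi
  obtain ⟨hB1, hB2, hB3⟩ := compEnd_mem hi
  by_cases hlt : compStart n J i < i.1
  · -- j is in the same component
    have hjJ : j ∈ J := mem_of_memJ (hA2 j.1 (by omega) (by omega))
    have hja : compStart n J j = compStart n J i := by
      apply le_antisymm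
      · exact Nat.sInf_le (⟨by omega, fun c h1 h2 => hA2 c h1 (by omega)⟩ :
          compStart n J i ∈ SaSet n J j)
      · obtain ⟨hm1, hm2⟩ : compStart n J j ∈ SaSet n J j :=
          Nat.sInf_mem ⟨j.1, self_mem_SaSet hjJ⟩
        show sInf (SaSet n J i) ≤ compStart n J j
        refine Nat.sInf_le ⟨by omega, fun c h1 h2 => ?_⟩
        by_cases hc : c ≤ j.1
        · exact hm2 c h1 hc
        · have : c = i.1 := by omega
          subst this; exact memJ_self hi
    have hjb : compEnd n J j = compEnd n J i := by
      apply le_antisymm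
      · show sSup (SbSet n J j) ≤ compEnd n J i
        refine csSup_le ⟨j.1, self_mem_SbSet hjJ⟩ (fun b' hb' => ?_)
        obtain ⟨hb1, hb2, hb3⟩ := hb'
        by_cases hc : i.1 ≤ b'
        · exact le_csSup (SbSet_bdd i) ⟨hb1, hc, fun c h1 h2 => hb3 c (by omega) h2⟩
        · omega
      · show compEnd n J i ≤ sSup (SbSet n J j)
        refine le_csSup (SbSet_bdd j) ⟨hB1, by omega, fun c h1 h2 => ?_⟩
        by_cases hc : i.1 ≤ c
        · exact hB3 c hc h2
        · have : c = j.1 := by omega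
          subst this; exact memJ_self hjJ
    have h1 : compStart n J i ≤ j.1 := by omega
    have h2 : j.1 ≤ compEnd n J i := by omega
    rw [vJ, if_pos hjJ, hja, hjb]
    push_cast [Nat.cast_sub (by omega : compStart n J i ≤ j.1 + 1),
      Nat.cast_sub (by omega : j.1 ≤ compEnd n J i + 1)]
    have : (i.1 : ℝ) = (j.1 : ℝ) + 1 := by exact_mod_cast hj.symm
    rw [this]; ring
  · -- i is the start of its component; j ∉ J
    have ha : compStart n J i = i.1 := le_antisymm hA1 (by omega)
    have hjJ : j ∉ J := by
      intro hjJ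
      have hmem : j.1 ∈ SaSet n J i := by
        refine ⟨by omega, fun c h1 h2 => ?_⟩
        by_cases hc : c = j.1
        · subst hc; exact memJ_self hjJ
        · have : c = i.1 := by omega
          subst this; exact memJ_self hi
      have : compStart n J i ≤ j.1 := Nat.sInf_le hmem
      omega
    rw [vJ, if_neg hjJ, ha]
    simp

/-- value of the right neighbor coordinate -/
lemma vJ_right {i : Fin (n-1)} (hi : i ∈ J) (j : Fin (n-1)) (hj : j.1 = i.1 + 1) :
    vJ n J j = ((compEnd n J i : ℝ) - i.1) * ((i.1 : ℝ) - compStart n J i + 2) := by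
  obtain ⟨hA1, hA2⟩ := compStart_mem hi
  obtain ⟨hB1, hB2, hB3⟩ := compEnd_mem hi
  by_cases hlt : i.1 < compEnd n J i
  · have hjJ : j ∈ J := mem_of_memJ (hB3 j.1 (by omega) (by omega))
    have hja : compStart n J j = compStart n J i := by
      apply le_antisymm
      · refine Nat.sInf_le (⟨by omega, fun c h1 h2 => ?_⟩ :
          compStart n J i ∈ SaSet n J j)
        by_cases hc : c ≤ i.1
        · exact hA2 c h1 hc
        · have : c = j.1 := by omega
          subst this; exact memJ_self hjJ
      · obtain ⟨hm1, hm2⟩ : compStart n J j ∈ SaSet n J j :=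
          Nat.sInf_mem ⟨j.1, self_mem_SaSet hjJ⟩
        have hle : compStart n J j ≤ compStart n J i := by
          refine Nat.sInf_le (⟨by omega, fun c h1 h2 => ?_⟩ :
            compStart n J i ∈ SaSet n J j)
          by_cases hc : c ≤ i.1
          · exact hA2 c h1 hc
          · have : c = j.1 := by omega
            subst this; exact memJ_self hjJ
        show sInf (SaSet n J i) ≤ compStart n J j
        exact Nat.sInf_le ⟨by omega, fun c h1 h2 => hm2 c h1 (by omega)⟩
    have hjb : compEnd n J j = compEnd n J i := by
      apply le_antisymm
      · show sSup (SbSet n J j) ≤ compEnd n J i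
        refine csSup_le ⟨j.1, self_mem_SbSet hjJ⟩ (fun b' hb' => ?_)
        obtain ⟨hb1, hb2, hb3⟩ := hb'
        refine le_csSup (SbSet_bdd i) ⟨hb1, by omega, fun c h1 h2 => ?_⟩
        by_cases hc : c = i.1
        · subst hc; exact memJ_self hi
        · exact hb3 c (by omega) h2
      · show compEnd n J i ≤ sSup (SbSet n J j)
        exact le_csSup (SbSet_bdd j) ⟨hB1, by omega, fun c h1 h2 => hB3 c (by omega) h2⟩
    have h1 : compStart n J i ≤ j.1 := by omega
    have h2 : j.1 ≤ compEnd n J i := by omega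
    rw [vJ, if_pos hjJ, hja, hjb]
    push_cast [Nat.cast_sub (by omega : compStart n J i ≤ j.1 + 1),
      Nat.cast_sub (by omega : j.1 ≤ compEnd n J i + 1)]
    have : (j.1 : ℝ) = (i.1 : ℝ) + 1 := by exact_mod_cast hj
    rw [this]; ring
  · have hb : compEnd n J i = i.1 := le_antisymm (by omega) hB2
    have hjJ : j ∉ J := by
      intro hjJ
      have hmem : j.1 ∈ SbSet n J i := by
        refine ⟨j.isLt, by omega, fun c h1 h2 => ?_⟩
        by_cases hc : c = i.1
        · subst hc; exact memJ_self hi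
        · have : c = j.1 := by omega
          subst this; exact memJ_self hjJ
      have : j.1 ≤ compEnd n J i := le_csSup (SbSet_bdd i) hmem
      omega
    rw [vJ, if_neg hjJ, hb]
    simp

lemma sum_left (i : Fin (n-1)) (hi : i ∈ J) :
    (∑ j : Fin (n-1), if j.1 + 1 = i.1 then vJ n J j else 0) =
      ((i.1 : ℝ) - compStart n J i) * ((compEnd n J i : ℝ) - i.1 + 2) := by
  by_cases h0 : 0 < i.1
  · have hlt : i.1 - 1 < n - 1 := lt_of_le_of_lt (Nat.sub_le _ _) i.isLt
    have hj0 : (⟨i.1 - 1, hlt⟩ : Fin (n-1)).1 + 1 = i.1 := by simp; omega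
    rw [Finset.sum_eq_single (⟨i.1 - 1, hlt⟩ : Fin (n-1))]
    · rw [if_pos hj0, vJ_left hi _ hj0]
    · intro b _ hb
      exact if_neg (fun hc => hb (Fin.ext (by simp; omega)))
    · intro h; exact absurd (Finset.mem_univ _) h
  · have hi0 : i.1 = 0 := by omega
    have ha : compStart n J i = 0 := by have := compStart_le hi; omega
    rw [Finset.sum_eq_zero (fun j _ => if_neg (by omega))]
    rw [hi0, ha]; simp

lemma sum_right (i : Fin (n-1)) (hi : i ∈ J) :
    (∑ j : Fin (n-1), if j.1 = i.1 + 1 then vJ n J j else 0) =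
      ((compEnd n J i : ℝ) - i.1) * ((i.1 : ℝ) - compStart n J i + 2) := by
  by_cases h0 : i.1 + 1 < n - 1
  · have hj0 : (⟨i.1 + 1, h0⟩ : Fin (n-1)).1 = i.1 + 1 := rfl
    rw [Finset.sum_eq_single (⟨i.1 + 1, h0⟩ : Fin (n-1))]
    · rw [if_pos hj0, vJ_right hi _ hj0]
    · intro b _ hb
      exact if_neg (fun hc => hb (Fin.ext (by simp; omega)))
    · intro h; exact absurd (Finset.mem_univ _) h
  · have hb : compEnd n J i = i.1 := by
      have h1 := le_compEnd hi; have h2 := compEnd_lt hi; omega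
    rw [Finset.sum_eq_zero (fun j _ => if_neg (by have := j.isLt; omega))]
    rw [hb]; simp


lemma dot_negAlpha (i : Fin (n-1)) :
    dotR n (negAlphaV n i) (vJ n J) =
      (∑ j : Fin (n-1), if j.1 + 1 = i.1 then vJ n J j else 0) +
      (∑ j : Fin (n-1), if j.1 = i.1 + 1 then vJ n J j else 0) - 2 * vJ n J i := by
  have hterm : ∀ j : Fin (n-1), negAlphaV n i j * vJ n J j =
      (if j.1 + 1 = i.1 then vJ n J j else 0) + (if j.1 = i.1 + 1 then vJ n J j else 0)
        - 2 * (if j = i then vJ n J j else 0) := by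
    intro j
    rw [negAlphaV]
    split_ifs <;> ring
  rw [dotR, Finset.sum_congr rfl (fun j _ => hterm j), Finset.sum_sub_distrib,
    Finset.sum_add_distrib, ← Finset.mul_sum]
  simp [Finset.sum_ite_eq']

lemma dot_stdE (i : Fin (n-1)) : dotR n (stdE n i) (vJ n J) = vJ n J i := by
  rw [dotR]
  simp [stdE, ite_mul, Finset.sum_ite_eq']



end Helpers

/-- Lemma: `⟨-α^∨_i, v_J⟩ ≥ -2` with equality iff `i ∈ J`, and `⟨e_i, v_J⟩ ≥ 0`
with equality iff `i ∉ J`. -/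
theorem inner_products_with_vJ (n : ℕ) (hn : 2 ≤ n) (i : Fin (n-1)) (J : Set (Fin (n-1))) :
    ((-2 : ℝ) ≤ dotR n (negAlphaV n i) (vJ n J) ∧
      (dotR n (negAlphaV n i) (vJ n J) = -2 ↔ i ∈ J)) ∧
    ((0 : ℝ) ≤ dotR n (stdE n i) (vJ n J) ∧
      (dotR n (stdE n i) (vJ n J) = 0 ↔ i ∉ J)) := by
  constructor
  · rw [dot_negAlpha]
    by_cases hi : i ∈ J
    · have key : (∑ j : Fin (n-1), if j.1 + 1 = i.1 then vJ n J j else 0) +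
          (∑ j : Fin (n-1), if j.1 = i.1 + 1 then vJ n J j else 0) - 2 * vJ n J i = -2 := by
        rw [sum_left i hi, sum_right i hi, vJ_self_eq hi]
        ring
      rw [key]
      exact ⟨le_refl _, ⟨fun _ => hi, fun _ => rfl⟩⟩
    · have h1 : (0:ℝ) ≤ ∑ j : Fin (n-1), if j.1 + 1 = i.1 then vJ n J j else 0 :=
        Finset.sum_nonneg (fun j _ => by
          split_ifs
          · exact vJ_nonneg J j
          · exact le_refl _)
      have h2 : (0:ℝ) ≤ ∑ j : Fin (n-1), if j.1 = i.1 + 1 then vJ n J j else 0 :=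
        Finset.sum_nonneg (fun j _ => by
          split_ifs
          · exact vJ_nonneg J j
          · exact le_refl _)
      have h3 : vJ n J i = 0 := by rw [vJ, if_neg hi]
      refine ⟨by rw [h3]; linarith, ⟨fun h => ?_, fun h => absurd h hi⟩⟩
      rw [h3] at h; linarith
  · rw [dot_stdE]
    refine ⟨vJ_nonneg J i, ⟨fun h hiJ => ?_, fun h => by rw [vJ, if_neg h]⟩⟩
    have := vJ_pos hiJ; linarith


end PetersonPaper
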